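/- If g approximates exp(-Φ/2) in the weighted L² norm with error at most ε, i.e., ∫(exp(-Φ(x)/2) - g(x))² λ(x) dx ≤ ε², and 0 ≤ γ ≤ ε², then the squared Hellinger distance between the density f_X(x) = exp(-Φ(x))λ(x)/z (where z = ∫exp(-Φ(x))λ(x)dx) and the density f̂(x) = (γ + g(x)²)λ(x)/ẑ (where ẑ = γ + ∫g(x)²λ(x)dx) satisfies D_H(f_X, f̂)² ≤ 4ε²/z. -/

import Mathlib

open MeasureTheory Real

set_option maxHeartbeats 2000000 in
theorem stmt0 {d : ℕ} (lam Φ g : (Fin d → ℝ) → ℝ) (ε γ z zhat : ℝ)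
    (hlam_nonneg : ∀ x, 0 ≤ lam x)
    (hlam_prob : ∫ x, lam x = 1)
    (hΦ_meas : Measurable Φ) (hg_meas : Measurable g) (hlam_meas : Measurable lam)
    (h_int1 : Integrable (fun x => Real.exp (-Φ x) * lam x))
    (h_int2 : Integrable (fun x => (g x)^2 * lam x))
    (h_int3 : Integrable (fun x => (Real.exp (-Φ x / 2) - g x)^2 * lam x))
    (hz : z = ∫ x, Real.exp (-Φ x) * lam x)
    (hzhat : zhat = γ + ∫ x, (g x)^2 * lam x)
    (hz_pos : 0 < z)
    (happrox : ∫ x, (Real.exp (-Φ x / 2) - g x)^2 * lam x ≤ ε^2)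
    (hγ0 : 0 ≤ γ) (hγε : γ ≤ ε^2) :
    (1/2) * (∫ x, (Real.sqrt (Real.exp (-Φ x) * lam x / z)
      - Real.sqrt ((γ + (g x)^2) * lam x / zhat))^2) ≤ 4 * ε^2 / z := by
  set u : (Fin d → ℝ) → ℝ := fun x => Real.exp (-Φ x / 2) * Real.sqrt (lam x) with hu_def
  set v : (Fin d → ℝ) → ℝ := fun x => Real.sqrt ((γ + (g x)^2) * lam x) with hv_def
  set s : ℝ := Real.sqrt z with hs_def
  set t : ℝ := Real.sqrt zhat with ht_def
  have hs_pos : 0 < s := Real.sqrt_pos.mpr hz_pos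
  have hs_sq : s ^ 2 = z := Real.sq_sqrt hz_pos.le
  -- lam is integrable
  have hlam_int : Integrable lam := by
    by_contra h
    rw [integral_undef h] at hlam_prob
    norm_num at hlam_prob
  -- zhat nonneg
  have hzhat_nonneg : 0 ≤ zhat := by
    rw [hzhat]
    have : 0 ≤ ∫ x, (g x)^2 * lam x :=
      integral_nonneg fun x => mul_nonneg (sq_nonneg _) (hlam_nonneg x)
    linarith
  have ht_sq : t ^ 2 = zhat := Real.sq_sqrt hzhat_nonneg
  have ht_nonneg : 0 ≤ t := Real.sqrt_nonneg _
  -- pointwise squares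
  have hu_sq : ∀ x, u x ^ 2 = Real.exp (-Φ x) * lam x := by
    intro x
    have h1 : Real.exp (-Φ x / 2) ^ 2 = Real.exp (-Φ x) := by
      rw [sq, ← Real.exp_add]; ring_nf
    have h2 : Real.sqrt (lam x) ^ 2 = lam x := Real.sq_sqrt (hlam_nonneg x)
    simp only [hu_def, mul_pow, h1, h2]
  have hv_sq : ∀ x, v x ^ 2 = (γ + (g x)^2) * lam x := by
    intro x
    exact Real.sq_sqrt (mul_nonneg (by positivity) (hlam_nonneg x))
  have hu_nonneg : ∀ x, 0 ≤ u x := fun x =>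
    mul_nonneg (Real.exp_nonneg _) (Real.sqrt_nonneg _)
  have hv_nonneg : ∀ x, 0 ≤ v x := fun x => Real.sqrt_nonneg _
  have hu_meas : Measurable u := by
    apply Measurable.mul
    · exact (Real.measurable_exp.comp ((hΦ_meas.neg).div_const 2))
    · exact hlam_meas.sqrt
  have hv_meas : Measurable v := by
    apply Measurable.sqrt
    exact ((measurable_const.add (hg_meas.pow_const 2)).mul hlam_meas)
  have hv_eq : ∀ x, v x = Real.sqrt ((γ + (g x)^2) * lam x) := fun x => rfl
  -- integrability of u^2, v^2
  have hu2_int : Integrable (fun x => u x ^ 2) := by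
    simpa only [hu_sq] using h_int1
  have hv2_int : Integrable (fun x => v x ^ 2) := by
    have : (fun x => v x ^ 2) = fun x => γ * lam x + (g x)^2 * lam x := by
      funext x; rw [hv_sq]; ring
    rw [this]
    exact (hlam_int.const_mul γ).add h_int2
  have hz_eq : z = ∫ x, u x ^ 2 := by
    rw [hz]; congr 1; funext x; rw [hu_sq]
  have hzhat_eq : zhat = ∫ x, v x ^ 2 := by
    rw [hzhat]
    have : (fun x => v x ^ 2) = fun x => γ * lam x + (g x)^2 * lam x := by
      funext x; rw [hv_sq]; ring
    rw [this, integral_add (hlam_int.const_mul γ) h_int2, integral_const_mul, hlam_prob]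
    ring
  -- key pointwise bound: (u-v)^2 ≤ ((exp(-Φ/2)-g)^2 + γ) * lam
  have hptwise : ∀ x, (u x - v x)^2 ≤ ((Real.exp (-Φ x / 2) - g x)^2 + γ) * lam x := by
    intro x
    have ha : Real.sqrt (lam x) ^ 2 = lam x := Real.sq_sqrt (hlam_nonneg x)
    have hvx : v x = Real.sqrt (γ + (g x)^2) * Real.sqrt (lam x) := by
      simp only [hv_def]
      exact Real.sqrt_mul (by positivity) _
    have hc_sq : Real.sqrt (γ + (g x)^2) ^ 2 = γ + (g x)^2 :=
      Real.sq_sqrt (by positivity)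
    have hc_ge : g x ≤ Real.sqrt (γ + (g x)^2) := by
      have := Real.sqrt_le_sqrt (show (g x)^2 ≤ γ + (g x)^2 by linarith)
      calc g x ≤ |g x| := le_abs_self _
        _ = Real.sqrt ((g x)^2) := (Real.sqrt_sq_eq_abs _).symm
        _ ≤ _ := this
    have hE : 0 ≤ Real.exp (-Φ x / 2) := Real.exp_nonneg _
    rw [hu_def, hvx]
    have hexp : Real.exp (-Φ x / 2) ^ 2 = Real.exp (-Φ x) := by
      rw [sq, ← Real.exp_add]; ring_nf
    nlinarith [sq_nonneg (Real.sqrt (lam x)), Real.sqrt_nonneg (lam x),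
      mul_le_mul_of_nonneg_left hc_ge hE, sq_nonneg (Real.sqrt (lam x)) ]
  clear_value u v s t
  -- integrability of (u-v)^2 and of u*v
  have hbound_int : Integrable (fun x => ((Real.exp (-Φ x / 2) - g x)^2 + γ) * lam x) := by
    have : (fun x => ((Real.exp (-Φ x / 2) - g x)^2 + γ) * lam x)
        = fun x => (Real.exp (-Φ x / 2) - g x)^2 * lam x + γ * lam x := by
      funext x; ring
    rw [this]
    exact h_int3.add (hlam_int.const_mul γ)
  have huv_meas : Measurable fun x => (u x - v x)^2 := ((hu_meas.sub hv_meas).pow_const 2)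
  have hA_int : Integrable (fun x => (u x - v x)^2) := by
    apply hbound_int.mono' huv_meas.aestronglyMeasurable
    filter_upwards with x
    rw [Real.norm_eq_abs, abs_of_nonneg (sq_nonneg _)]
    exact hptwise x
  have hmul_int : Integrable (fun x => u x * v x) := by
    have h2 : Integrable (fun x => (u x ^ 2 + v x ^ 2) / 2) := (hu2_int.add hv2_int).div_const 2
    apply h2.mono' ((hu_meas.mul hv_meas).aestronglyMeasurable)
    filter_upwards with x
    rw [Real.norm_eq_abs, Pi.mul_apply, abs_mul, abs_of_nonneg (hu_nonneg x), abs_of_nonneg (hv_nonneg x)]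
    nlinarith [sq_nonneg (u x - v x)]
  set A : ℝ := ∫ x, (u x - v x)^2 with hA_def
  have hA_nonneg : 0 ≤ A := hA_def ▸ integral_nonneg fun x => sq_nonneg _
  clear_value A
  have hA_le : A ≤ ε^2 + γ := by
    have h1 : A ≤ ∫ x, ((Real.exp (-Φ x / 2) - g x)^2 + γ) * lam x := by
      rw [hA_def]
      exact integral_mono hA_int hbound_int hptwise
    have h2 : (∫ x, ((Real.exp (-Φ x / 2) - g x)^2 + γ) * lam x)
        = (∫ x, (Real.exp (-Φ x / 2) - g x)^2 * lam x) + γ := by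
      have : (fun x => ((Real.exp (-Φ x / 2) - g x)^2 + γ) * lam x)
          = fun x => (Real.exp (-Φ x / 2) - g x)^2 * lam x + γ * lam x := by
        funext x; ring
      rw [this, integral_add h_int3 (hlam_int.const_mul γ), integral_const_mul, hlam_prob]
      ring
    linarith
  -- A = z + zhat - 2 ∫ u v
  have hA_eq : A = z + zhat - 2 * ∫ x, u x * v x := by
    have : (fun x => (u x - v x)^2) = fun x => u x ^ 2 + v x ^ 2 - 2 * (u x * v x) := by
      funext x; ring
    have hsum : Integrable (fun x => u x ^ 2 + v x ^ 2) := hu2_int.add hv2_int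
    have hm2 : Integrable (fun x => 2 * (u x * v x)) := hmul_int.const_mul 2
    rw [hA_def, this, integral_sub hsum hm2,
      integral_add hu2_int hv2_int, integral_const_mul, hz_eq, hzhat_eq]
  -- key bound on the normalization term
  have hkey : (1/s - 1/t)^2 * zhat ≤ A / z := by
    rcases eq_or_lt_of_le hzhat_nonneg with h0 | hpos
    · rw [← h0, mul_zero]
      positivity
    · have ht_pos : 0 < t := by
        rcases ht_nonneg.lt_or_eq with h | h
        · exact h
        · exfalso; rw [← h] at ht_sq; nlinarith
      -- Cauchy-Schwarz via nonnegativity of ∫ (t u - s v)^2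
      have hCS : ∫ x, u x * v x ≤ s * t := by
        have hnn : 0 ≤ ∫ x, (t * u x - s * v x)^2 := integral_nonneg fun x => sq_nonneg _
        have hexpand : (fun x => (t * u x - s * v x)^2)
            = fun x => t^2 * u x ^2 + s^2 * v x ^2 - 2 * t * s * (u x * v x) := by
          funext x; ring
        have hi1 : Integrable (fun x => t^2 * u x ^ 2) := hu2_int.const_mul _
        have hi2 : Integrable (fun x => s^2 * v x ^ 2) := hv2_int.const_mul _
        have hi12 : Integrable (fun x => t^2 * u x ^ 2 + s^2 * v x ^ 2) := hi1.add hi2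
        have hi3 : Integrable (fun x => 2 * t * s * (u x * v x)) := hmul_int.const_mul _
        rw [hexpand, integral_sub hi12 hi3, integral_add hi1 hi2,
          integral_const_mul, integral_const_mul, integral_const_mul, ← hz_eq, ← hzhat_eq] at hnn
        have hst : 0 < s * t := mul_pos hs_pos ht_pos
        rw [hs_sq, ht_sq] at hnn
        have : 2 * t * s * ∫ x, u x * v x ≤ 2 * (zhat * z) := by linarith
        have hzz : zhat * z = (s * t)^2 := by rw [mul_pow, hs_sq, ht_sq]; ring
        nlinarith
      have h1 : (t - s)^2 ≤ A := by
        have hts : (t - s)^2 = zhat + z - 2*(s*t) := by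
          rw [← hs_sq, ← ht_sq]; ring
        rw [hA_eq, hts]
        linarith [hCS]
      have h2 : (1/s - 1/t)^2 * zhat = (t - s)^2 / z := by
        have e1 : 1/s - 1/t = (t - s)/(s*t) := by
          rw [div_sub_div _ _ hs_pos.ne' ht_pos.ne']; ring
        rw [← ht_sq, ← hs_sq, e1, div_pow, mul_pow, div_mul_eq_mul_div,
          mul_div_mul_right _ _ (pow_ne_zero 2 ht_pos.ne')]
      rw [h2]
      exact (div_le_div_iff_of_pos_right hz_pos).mpr h1
  -- the integrand of the goal equals (u/s - v/t)^2
  have hintegrand : ∀ x, (Real.sqrt (Real.exp (-Φ x) * lam x / z)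
      - Real.sqrt ((γ + (g x)^2) * lam x / zhat))^2 = (u x / s - v x / t)^2 := by
    intro x
    have h1 : Real.sqrt (Real.exp (-Φ x) * lam x / z) = u x / s := by
      rw [Real.sqrt_div (mul_nonneg (Real.exp_nonneg _) (hlam_nonneg x)), ← hu_sq x,
        Real.sqrt_sq (hu_nonneg x), hs_def]
    have h2 : Real.sqrt ((γ + (g x)^2) * lam x / zhat) = v x / t := by
      rw [Real.sqrt_div (mul_nonneg (by positivity) (hlam_nonneg x)), ht_def, hv_eq x]
    rw [h1, h2]
  -- the dominating function and its integral
  have hdom_int : Integrable (fun x => 2 * ((u x - v x)/s)^2 + 2 * (v x * (1/s - 1/t))^2) := by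
    have he : (fun x => 2 * ((u x - v x)/s)^2 + 2 * (v x * (1/s - 1/t))^2)
        = fun x => (2 / s^2) * (u x - v x)^2 + (2 * (1/s - 1/t)^2) * v x ^2 := by
      funext x; field_simp
    rw [he]
    have hi1 : Integrable (fun x => (2 / s^2) * (u x - v x)^2) := hA_int.const_mul _
    have hi2 : Integrable (fun x => (2 * (1/s - 1/t)^2) * v x ^ 2) := hv2_int.const_mul _
    exact hi1.add hi2
  have hmain : (∫ x, (u x / s - v x / t)^2)
      ≤ 2 * A / z + 2 * ((1/s - 1/t)^2 * zhat) := by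
    have hle : (∫ x, (u x / s - v x / t)^2)
        ≤ ∫ x, (2 * ((u x - v x)/s)^2 + 2 * (v x * (1/s - 1/t))^2) := by
      apply integral_mono_of_nonneg (Filter.Eventually.of_forall fun x => sq_nonneg _) hdom_int
      filter_upwards with x
      have hid : u x / s - v x / t = (u x - v x)/s + v x * (1/s - 1/t) := by
        simp only [div_eq_mul_inv, one_mul]; ring
      rw [hid]
      nlinarith [sq_nonneg ((u x - v x)/s - v x * (1/s - 1/t))]
    have heq : (∫ x, (2 * ((u x - v x)/s)^2 + 2 * (v x * (1/s - 1/t))^2))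
        = 2 * A / z + 2 * ((1/s - 1/t)^2 * zhat) := by
      have he : (fun x => 2 * ((u x - v x)/s)^2 + 2 * (v x * (1/s - 1/t))^2)
          = fun x => (2 / s^2) * (u x - v x)^2 + (2 * (1/s - 1/t)^2) * v x ^2 := by
        funext x; field_simp
      have hi1 : Integrable (fun x => (2 / s^2) * (u x - v x)^2) := hA_int.const_mul _
      have hi2 : Integrable (fun x => (2 * (1/s - 1/t)^2) * v x ^ 2) := hv2_int.const_mul _
      rw [he, integral_add hi1 hi2,
        integral_const_mul, integral_const_mul, ← hA_def, ← hzhat_eq, hs_sq]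
      ring
    linarith
  -- conclude
  have hLHS : (∫ x, (Real.sqrt (Real.exp (-Φ x) * lam x / z)
      - Real.sqrt ((γ + (g x)^2) * lam x / zhat))^2) = ∫ x, (u x / s - v x / t)^2 := by
    congr 1; funext x; exact hintegrand x
  rw [hLHS]
  have hfinal : 2 * A / z + 2 * ((1/s - 1/t)^2 * zhat) ≤ 4 * A / z := by
    have h2A : 2 * (A / z) = 4 * A / z - 2 * A / z := by ring
    linarith [hkey]
  have hAz : 4 * A / z ≤ 8 * ε^2 / z := by
    rw [div_le_div_iff₀ hz_pos hz_pos]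
    nlinarith
  have h8 : 8 * ε^2 / z = 2 * (4 * ε^2 / z) := by ring
  linarith [hmain, hfinal, hAz]
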